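/- For every n ≥ 1 there exist rational numbers a₁,…,a_n, independent of k, such that for all k ≥ 0 the number of k-Rvalid vectors of size n equals Σ_{i=1}^{n} a_i·(i^i)^k. -/

import Mathlib

open Finset

/-- `Π·h`: the vector whose `q`-th entry is the union of the `Π p` over all `p` with `h p = q`. -/
def dotAct {n : ℕ} (Pi : Fin n → Finset ℕ) (h : Fin n → Fin n) : Fin n → Finset ℕ :=
  fun q => (Finset.univ.filter (fun p => h p = q)).biUnion Pi

/-- Entrywise union of two vectors of sets. -/
def vUnion {n : ℕ} (Pi Pi' : Fin n → Finset ℕ) : Fin n → Finset ℕ :=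
  fun q => Pi q ∪ Pi' q

/-- `r = max (π₀ ∪ … ∪ π_{n−1})`. -/
def vMax {n : ℕ} (Pi : Fin n → Finset ℕ) : ℕ :=
  (Finset.univ.sup Pi).sup id

/-- `Π↑`: add `r = max (π₀ ∪ … ∪ π_{n−1})` to every element of every entry. -/
def vUp {n : ℕ} (Pi : Fin n → Finset ℕ) : Fin n → Finset ℕ :=
  fun q => (Pi q).image (· + vMax Pi)

/-- A `k`-EXPcomposition of size `n`: pairwise disjoint entries whose union is `{1,…,2^k}`. -/
def IsEXP {n : ℕ} (k : ℕ) (Pi : Fin n → Finset ℕ) : Prop :=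
  (∀ p q : Fin n, p ≠ q → Disjoint (Pi p) (Pi q)) ∧
    Finset.univ.sup Pi = Finset.Icc 1 (2 ^ k)

/-- A `k`-Rvalid vector of size `n`. -/
def IsRvalid {n : ℕ} (k : ℕ) (ρ : Fin n → Finset ℕ) : Prop :=
  IsEXP k ρ ∧ (∀ p : Fin n, p.val = 0 → 1 ∈ ρ p) ∧
    ∀ k' < k, ∀ i ∈ Finset.Icc 1 (2 ^ k'), ∀ j ∈ Finset.Icc 1 (2 ^ k'),
      (∃ α, i ∈ ρ α ∧ j ∈ ρ α) → ∃ β, i + 2 ^ k' ∈ ρ β ∧ j + 2 ^ k' ∈ ρ β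

/-- A `k`-Lvalid vector of size `m`. -/
def IsLvalid {m : ℕ} (k : ℕ) (lam : Fin m → Finset ℕ) : Prop :=
  IsEXP k lam ∧ (∀ p : Fin m, p.val = 0 → 2 ^ k ∈ lam p) ∧
    ∀ k' < k, ∀ i ∈ Finset.Icc 1 (2 ^ k'), ∀ j ∈ Finset.Icc 1 (2 ^ k'),
      (∃ α, 2 ^ k + 1 - i ∈ lam α ∧ 2 ^ k + 1 - j ∈ lam α) →
        ∃ β, 2 ^ k + 1 - (i + 2 ^ k') ∈ lam β ∧ 2 ^ k + 1 - (j + 2 ^ k') ∈ lam β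

/-- Number of nonempty entries of a vector of sets. -/
def nne {n : ℕ} (Pi : Fin n → Finset ℕ) : ℕ :=
  (Finset.univ.filter (fun q => Pi q ≠ ∅)).card

/-- `succ(P) = {P ∪ (P·g)↑ : g}`. -/
def succSet {n : ℕ} (P : Fin n → Finset ℕ) : Finset (Fin n → Finset ℕ) :=
  (Finset.univ : Finset (Fin n → Fin n)).image (fun g => vUnion P (vUp (dotAct P g)))

/-- The graded set `U_{m,n}^{(k)}` of U-pairs. -/
def Uset (m n : ℕ) : ℕ → Set ((Fin m → Finset ℕ) × (Fin n → Finset ℕ))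
  | 0 => {x | x = (fun p => if p.val = 0 then {1} else ∅,
                   fun q => if q.val = 0 then {1} else ∅)}
  | k + 1 => {x | ∃ L P, (L, P) ∈ Uset m n k ∧ ∃ (f : Fin m → Fin m) (g : Fin n → Fin n),
      x = (vUnion (dotAct L f) (vUp L), vUnion P (vUp (dotAct P g)))}

/-- The `r`-Stirling number: partitions of `{1,…,a}` into `b` nonempty blocks
with `1,…,r` in pairwise distinct blocks. -/
noncomputable def rStirling (a b r : ℕ) : ℕ :=
  Set.ncard {C : Finset (Finset ℕ) |
    C.card = b ∧ (∅ ∉ C) ∧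
    (∀ B ∈ C, ∀ B' ∈ C, B ≠ B' → Disjoint B B') ∧
    C.sup id = Finset.Icc 1 a ∧
    ∀ x ∈ Finset.Icc 1 r, ∀ y ∈ Finset.Icc 1 r, x ≠ y →
      ∀ B ∈ C, x ∈ B → y ∉ B}

/-- The Stirling number of the second kind: the number of partitions of an
`a`-element set into `b` nonempty blocks. -/
noncomputable def stirling2 (a b : ℕ) : ℕ := rStirling a b 0

/-- The entry `s_n^{(i,j)}` (with `1 ≤ i,j ≤ n`). -/
noncomputable def sEntry (n i j : ℕ) : ℕ :=
  if i ≤ j then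
    (j - i).factorial * Nat.choose (n - i) (j - i) *
      ∑ α ∈ Finset.Icc (j - i) i, Nat.choose i α * i ^ (i - α) * stirling2 α (j - i)
  else 0

/-- The matrix `S_n`, with rows and columns indexed by `{1,…,n}`. -/
noncomputable def Smat (n : ℕ) : Matrix (Fin n) (Fin n) ℕ :=
  fun i j => sEntry n (i.val + 1) (j.val + 1)

/-- One step of the shuffle-automaton action on subsets of the grid. -/
def stepE {m n : ℕ} (E : Finset (Fin m × Fin n)) (f : Fin m → Fin m) (g : Fin n → Fin n) :
    Finset (Fin m × Fin n) :=
  E.image (fun p => (f p.1, p.2)) ∪ E.image (fun p => (p.1, g p.2))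

/-- Reachability from `{(0,0)}` by finitely many steps. -/
def Reach {m n : ℕ} (hm : 0 < m) (hn : 0 < n) (E : Finset (Fin m × Fin n)) : Prop :=
  Relation.ReflTransGen (fun E1 E2 => ∃ f g, E2 = stepE E1 f g)
    {(⟨0, hm⟩, ⟨0, hn⟩)} E

/-- Reachability from `{(0,0)}` in at most `t` steps. -/
def ReachIn {m n : ℕ} (hm : 0 < m) (hn : 0 < n) :
    ℕ → Finset (Fin m × Fin n) → Prop
  | 0, E => E = {(⟨0, hm⟩, ⟨0, hn⟩)}
  | t + 1, E => ReachIn hm hn t E ∨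
      ∃ E' f g, ReachIn hm hn t E' ∧ E = stepE E' f g

/-- `s(Λ,P) = {(i,j) : λ_i ∩ ρ_j ≠ ∅}`. -/
def sTab {m n : ℕ} (L : Fin m → Finset ℕ) (P : Fin n → Finset ℕ) :
    Finset (Fin m × Fin n) :=
  Finset.univ.filter (fun p => (L p.1 ∩ P p.2).Nonempty)

namespace Stmt14Aux

variable {n : ℕ}

/-- The successor map: `Fr P g = P ∪ (P·g)↑`. -/
def Fr (P : Fin n → Finset ℕ) (g : Fin n → Fin n) : Fin n → Finset ℕ :=
  vUnion P (vUp (dotAct P g))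

/-- Set of nonempty slots. -/
def slotsF (ρ : Fin n → Finset ℕ) : Finset (Fin n) :=
  Finset.univ.filter (fun q => ρ q ≠ ∅)

lemma mem_dotAct {P : Fin n → Finset ℕ} {g : Fin n → Fin n} {q : Fin n} {x : ℕ} :
    x ∈ dotAct P g q ↔ ∃ p, g p = q ∧ x ∈ P p := by
  simp only [dotAct, Finset.mem_biUnion, Finset.mem_filter, Finset.mem_univ, true_and]

lemma exp_memIcc {k : ℕ} {P : Fin n → Finset ℕ} (h : IsEXP k P) {q : Fin n} {x : ℕ}
    (hx : x ∈ P q) : x ∈ Finset.Icc 1 (2 ^ k) := by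
  rw [← h.2, Finset.mem_sup]; exact ⟨q, Finset.mem_univ q, hx⟩

lemma exp_cover {k : ℕ} {P : Fin n → Finset ℕ} (h : IsEXP k P) {x : ℕ}
    (hx : x ∈ Finset.Icc 1 (2 ^ k)) : ∃ q, x ∈ P q := by
  rw [← h.2, Finset.mem_sup] at hx
  obtain ⟨q, _, hq⟩ := hx; exact ⟨q, hq⟩

lemma exp_unique {k : ℕ} {P : Fin n → Finset ℕ} (h : IsEXP k P) {q q' : Fin n} {x : ℕ}
    (hx : x ∈ P q) (hx' : x ∈ P q') : q = q' := by
  by_contra hne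
  exact (Finset.disjoint_left.1 (h.1 q q' hne)) hx hx'

lemma sup_id_Icc {m : ℕ} (hm : 1 ≤ m) : (Finset.Icc 1 m).sup id = m := by
  apply le_antisymm
  · exact Finset.sup_le fun x hx => (Finset.mem_Icc.1 hx).2
  · exact Finset.le_sup (f := id) (Finset.mem_Icc.2 ⟨hm, le_rfl⟩)

lemma sup_dotAct (P : Fin n → Finset ℕ) (g : Fin n → Fin n) :
    Finset.univ.sup (dotAct P g) = Finset.univ.sup P := by
  ext x
  simp only [Finset.mem_sup, Finset.mem_univ, true_and, mem_dotAct]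
  constructor
  · rintro ⟨q, p, _, hp⟩; exact ⟨p, hp⟩
  · rintro ⟨p, hp⟩; exact ⟨g p, p, rfl, hp⟩

lemma exp_vMax_eq {k : ℕ} {P : Fin n → Finset ℕ} (h : IsEXP k P) : vMax P = 2 ^ k := by
  rw [vMax, h.2, sup_id_Icc Nat.one_le_two_pow]

lemma exp_vMax_dotAct {k : ℕ} {P : Fin n → Finset ℕ} (h : IsEXP k P) (g : Fin n → Fin n) :
    vMax (dotAct P g) = 2 ^ k := by
  rw [vMax, sup_dotAct, ← vMax, exp_vMax_eq h]

lemma mem_Fr {k : ℕ} {P : Fin n → Finset ℕ} (h : IsEXP k P) {g : Fin n → Fin n}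
    {q : Fin n} {x : ℕ} :
    x ∈ Fr P g q ↔ x ∈ P q ∨ ∃ p, g p = q ∧ ∃ y ∈ P p, x = y + 2 ^ k := by
  simp only [Fr, vUnion, vUp, exp_vMax_dotAct h g, Finset.mem_union, Finset.mem_image,
    mem_dotAct]
  constructor
  · rintro (hx | ⟨y, ⟨p, hgp, hyp⟩, rfl⟩)
    · exact Or.inl hx
    · exact Or.inr ⟨p, hgp, y, hyp, rfl⟩
  · rintro (hx | ⟨p, hgp, y, hyp, rfl⟩)
    · exact Or.inl hx
    · exact Or.inr ⟨y, ⟨p, hgp, hyp⟩, rfl⟩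

lemma exp_Fr_isEXP {k : ℕ} {P : Fin n → Finset ℕ} (h : IsEXP k P) (g : Fin n → Fin n) :
    IsEXP (k + 1) (Fr P g) := by
  have hlow : ∀ {q x}, x ∈ P q → 1 ≤ x ∧ x ≤ 2 ^ k := fun hx =>
    Finset.mem_Icc.1 (exp_memIcc h hx)
  constructor
  · intro q q' hne
    rw [Finset.disjoint_left]
    intro x hx hx'
    rcases (mem_Fr h).1 hx with h1 | ⟨p, hgp, y, hy, rfl⟩ <;>
      rcases (mem_Fr h).1 hx' with h2 | ⟨p', hgp', y', hy', hEq⟩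
    · exact hne (exp_unique h h1 h2)
    · have := (hlow h1).2; have := (hlow hy').1; omega
    · have := (hlow h2).2; have := (hlow hy).1; omega
    · have hyy : y = y' := by omega
      subst hyy
      have : p = p' := exp_unique h hy hy'
      subst this
      exact hne (hgp ▸ hgp' ▸ rfl)
  · ext x
    simp only [Finset.mem_sup, Finset.mem_univ, true_and, Finset.mem_Icc]
    constructor
    · rintro ⟨q, hq⟩
      rcases (mem_Fr h).1 hq with h1 | ⟨p, _, y, hy, rfl⟩
      · have := hlow h1
        have : (2:ℕ) ^ k ≤ 2 ^ (k+1) := Nat.pow_le_pow_right (by norm_num) (by omega)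
        omega
      · have := hlow hy
        have h2 : (2:ℕ) ^ (k+1) = 2 ^ k + 2 ^ k := by ring
        omega
    · rintro ⟨h1, h2⟩
      by_cases hc : x ≤ 2 ^ k
      · obtain ⟨q, hq⟩ := exp_cover h (Finset.mem_Icc.2 ⟨h1, hc⟩)
        exact ⟨q, (mem_Fr h).2 (Or.inl hq)⟩
      · push_neg at hc
        have h3 : (2:ℕ) ^ (k+1) = 2 ^ k + 2 ^ k := by ring
        have hy : x - 2 ^ k ∈ Finset.Icc 1 (2 ^ k) := Finset.mem_Icc.2 (by omega)
        obtain ⟨p, hp⟩ := exp_cover h hy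
        exact ⟨g p, (mem_Fr h).2 (Or.inr ⟨p, rfl, x - 2 ^ k, hp, by omega⟩)⟩

lemma slots_Fr {k : ℕ} {P : Fin n → Finset ℕ} (h : IsEXP k P) (g : Fin n → Fin n) :
    slotsF (Fr P g) = slotsF P ∪ (slotsF P).image g := by
  ext q
  simp only [slotsF, Finset.mem_filter, Finset.mem_univ, true_and, Finset.mem_union,
    Finset.mem_image, ← Finset.nonempty_iff_ne_empty]
  constructor
  · rintro ⟨x, hx⟩
    rcases (mem_Fr h).1 hx with h1 | ⟨p, hgp, y, hy, _⟩
    · exact Or.inl ⟨x, h1⟩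
    · exact Or.inr ⟨p, ⟨y, hy⟩, hgp⟩
  · rintro (⟨x, hx⟩ | ⟨p, ⟨y, hy⟩, hgp⟩)
    · exact ⟨x, (mem_Fr h).2 (Or.inl hx)⟩
    · exact ⟨y + 2 ^ k, (mem_Fr h).2 (Or.inr ⟨p, hgp, y, hy, rfl⟩)⟩

lemma rvalid_Fr {k : ℕ} {P : Fin n → Finset ℕ} (hP : IsRvalid k P) (g : Fin n → Fin n) :
    IsRvalid (k + 1) (Fr P g) := by
  obtain ⟨hE, h1, hcl⟩ := hP
  refine ⟨exp_Fr_isEXP hE g, ?_, ?_⟩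
  · intro p hp
    exact (mem_Fr hE).2 (Or.inl (h1 p hp))
  · intro k' hk' i hi j hj hex
    obtain ⟨α, hiα, hjα⟩ := hex
    have hi' := Finset.mem_Icc.1 hi
    have hj' := Finset.mem_Icc.1 hj
    by_cases hc : k' < k
    · have hle : (2:ℕ) ^ k' ≤ 2 ^ k := Nat.pow_le_pow_right (by norm_num) (le_of_lt hc)
      have hiP : i ∈ P α := by
        rcases (mem_Fr hE).1 hiα with h | ⟨p, _, y, hy, rfl⟩
        · exact h
        · have := (Finset.mem_Icc.1 (exp_memIcc hE hy)).1; omega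
      have hjP : j ∈ P α := by
        rcases (mem_Fr hE).1 hjα with h | ⟨p, _, y, hy, rfl⟩
        · exact h
        · have := (Finset.mem_Icc.1 (exp_memIcc hE hy)).1; omega
      obtain ⟨β, hb1, hb2⟩ := hcl k' hc i hi j hj ⟨α, hiP, hjP⟩
      exact ⟨β, (mem_Fr hE).2 (Or.inl hb1), (mem_Fr hE).2 (Or.inl hb2)⟩
    · have hk : k' = k := by omega
      subst hk
      have hiP : i ∈ P α := by
        rcases (mem_Fr hE).1 hiα with h | ⟨p, _, y, hy, rfl⟩
        · exact h
        · have := (Finset.mem_Icc.1 (exp_memIcc hE hy)).1; omega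
      have hjP : j ∈ P α := by
        rcases (mem_Fr hE).1 hjα with h | ⟨p, _, y, hy, rfl⟩
        · exact h
        · have := (Finset.mem_Icc.1 (exp_memIcc hE hy)).1; omega
      exact ⟨g α, (mem_Fr hE).2 (Or.inr ⟨α, rfl, i, hiP, rfl⟩),
        (mem_Fr hE).2 (Or.inr ⟨α, rfl, j, hjP, rfl⟩)⟩

lemma rvalid_succ {k : ℕ} {ρ : Fin n → Finset ℕ} (hρ : IsRvalid (k + 1) ρ) :
    ∃ P, IsRvalid k P ∧ ∃ g, ρ = Fr P g := by
  classical
  obtain ⟨hE, h1, hcl⟩ := hρ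
  set P : Fin n → Finset ℕ := fun q => ρ q ∩ Finset.Icc 1 (2 ^ k) with hPdef
  have h2k : (2:ℕ) ^ (k + 1) = 2 ^ k + 2 ^ k := by ring
  have hmemρ : ∀ {q x}, x ∈ ρ q → 1 ≤ x ∧ x ≤ 2 ^ (k + 1) := fun hx =>
    Finset.mem_Icc.1 (exp_memIcc hE hx)
  have hPmem : ∀ {q : Fin n} {x : ℕ}, x ∈ P q ↔ x ∈ ρ q ∧ 1 ≤ x ∧ x ≤ 2 ^ k := by
    intro q x
    simp [hPdef, Finset.mem_inter, Finset.mem_Icc, and_assoc]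
  have hEP : IsEXP k P := by
    constructor
    · intro p q hne
      rw [Finset.disjoint_left]
      intro x hx hx'
      exact Finset.disjoint_left.1 (hE.1 p q hne) (hPmem.1 hx).1 (hPmem.1 hx').1
    · ext x
      simp only [Finset.mem_sup, Finset.mem_univ, true_and, Finset.mem_Icc]
      constructor
      · rintro ⟨q, hq⟩
        exact (hPmem.1 hq).2
      · rintro ⟨hx1, hx2⟩
        have hxm : x ∈ Finset.Icc 1 (2 ^ (k + 1)) := Finset.mem_Icc.2 ⟨hx1, by omega⟩
        obtain ⟨q, hq⟩ := exp_cover hE hxm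
        exact ⟨q, hPmem.2 ⟨hq, hx1, hx2⟩⟩
  have hgex : ∀ p : Fin n, ∃ β : Fin n, P p = ∅ ∨ ∃ y ∈ P p, y + 2 ^ k ∈ ρ β := by
    intro p
    by_cases hPp : P p = ∅
    · exact ⟨p, Or.inl hPp⟩
    · obtain ⟨y, hy⟩ := Finset.nonempty_iff_ne_empty.2 hPp
      have hy' := hPmem.1 hy
      obtain ⟨β, hβ⟩ := exp_cover hE (Finset.mem_Icc.2 (⟨by omega, by omega⟩ :
        1 ≤ y + 2 ^ k ∧ y + 2 ^ k ≤ 2 ^ (k + 1)))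
      exact ⟨β, Or.inr ⟨y, hy, hβ⟩⟩
  choose g hg using hgex
  have hkey : ∀ {p : Fin n} {y : ℕ}, y ∈ P p → y + 2 ^ k ∈ ρ (g p) := by
    intro p y hy
    rcases hg p with hemp | ⟨y0, hy0, hy0'⟩
    · rw [hemp] at hy; simp at hy
    · have h1y := hPmem.1 hy
      have h1y0 := hPmem.1 hy0
      obtain ⟨β, hb0, hb⟩ := hcl k (Nat.lt_succ_self k) y0
        (Finset.mem_Icc.2 ⟨h1y0.2.1, h1y0.2.2⟩) y (Finset.mem_Icc.2 ⟨h1y.2.1, h1y.2.2⟩)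
        ⟨p, h1y0.1, h1y.1⟩
      have hβ : β = g p := exp_unique hE hb0 hy0'
      exact hβ ▸ hb
  refine ⟨P, ⟨hEP, ?_, ?_⟩, g, ?_⟩
  · intro p hp
    exact hPmem.2 ⟨h1 p hp, le_rfl, Nat.one_le_two_pow⟩
  · intro k' hk' i hi j hj hex
    obtain ⟨α, hiα, hjα⟩ := hex
    obtain ⟨β, hb1, hb2⟩ := hcl k' (by omega) i hi j hj ⟨α, (hPmem.1 hiα).1, (hPmem.1 hjα).1⟩
    have hi' := Finset.mem_Icc.1 hi
    have hj' := Finset.mem_Icc.1 hj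
    have hle : (2:ℕ) ^ (k' + 1) ≤ 2 ^ k := Nat.pow_le_pow_right (by norm_num) (by omega)
    have hle2 : (2:ℕ) ^ (k' + 1) = 2 ^ k' + 2 ^ k' := by ring
    exact ⟨β, hPmem.2 ⟨hb1, by omega, by omega⟩, hPmem.2 ⟨hb2, by omega, by omega⟩⟩
  · funext q
    ext x
    rw [mem_Fr hEP]
    constructor
    · intro hx
      have hxr := hmemρ hx
      by_cases hc : x ≤ 2 ^ k
      · exact Or.inl (hPmem.2 ⟨hx, hxr.1, hc⟩)
      · have hy : x - 2 ^ k ∈ Finset.Icc 1 (2 ^ k) := Finset.mem_Icc.2 ⟨by omega, by omega⟩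
        obtain ⟨p, hp⟩ := exp_cover hEP hy
        have hx2 : x - 2 ^ k + 2 ^ k ∈ ρ (g p) := hkey hp
        rw [show x - 2 ^ k + 2 ^ k = x by omega] at hx2
        have hq : q = g p := exp_unique hE hx hx2
        exact Or.inr ⟨p, hq.symm, x - 2 ^ k, hp, by omega⟩
    · rintro (hx | ⟨p, rfl, y, hy, rfl⟩)
      · exact (hPmem.1 hx).1
      · exact hkey hy

/-- The unique 0-Rvalid vector. -/
def rho0 (n : ℕ) : Fin n → Finset ℕ := fun q => if q.val = 0 then {1} else ∅

lemma rvalid_zero (hn : 1 ≤ n) (ρ : Fin n → Finset ℕ) : IsRvalid 0 ρ ↔ ρ = rho0 n := by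
  constructor
  · rintro ⟨hE, h1, _⟩
    have hsub : ∀ {q : Fin n} {x : ℕ}, x ∈ ρ q → x = 1 := by
      intro q x hx
      have := Finset.mem_Icc.1 (exp_memIcc hE hx)
      omega
    have h0 := h1 ⟨0, hn⟩ rfl
    funext q
    ext x
    simp only [rho0]
    by_cases hq : q.val = 0
    · have hq' : q = ⟨0, hn⟩ := Fin.ext hq
      simp only [hq, if_true, Finset.mem_singleton]
      constructor
      · exact fun hx => hsub hx
      · rintro rfl; rw [hq']; exact h0
    · simp only [hq, if_false, Finset.notMem_empty, iff_false]
      intro hx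
      have hx1 : x = 1 := hsub hx
      subst hx1
      have hqq : q = ⟨0, hn⟩ := exp_unique hE hx h0
      exact hq (by rw [hqq])
  · rintro rfl
    refine ⟨⟨?_, ?_⟩, ?_, ?_⟩
    · intro p q hne
      rw [Finset.disjoint_left]
      intro x hx hx'
      simp only [rho0] at hx hx'
      by_cases hp : p.val = 0 <;> by_cases hq : q.val = 0 <;>
        simp [hp, hq] at hx hx'
      exact hne (Fin.ext (hp.trans hq.symm))
    · ext x
      simp only [Finset.mem_sup, Finset.mem_univ, true_and, pow_zero, Finset.mem_Icc]
      constructor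
      · rintro ⟨q, hq⟩
        simp only [rho0] at hq
        by_cases h : q.val = 0 <;> simp [h] at hq
        omega
      · rintro ⟨hx1, hx2⟩
        refine ⟨⟨0, hn⟩, ?_⟩
        simp only [rho0]
        simp
        omega
    · intro p hp
      simp [rho0, hp]
    · intro k' hk'
      exact absurd hk' (Nat.not_lt_zero k')

/-- Finset of `k`-Rvalid vectors, built recursively. -/
def Rfin (n : ℕ) : ℕ → Finset (Fin n → Finset ℕ)
  | 0 => {rho0 n}
  | k + 1 => (Rfin n k).biUnion succSet

lemma mem_succSet {P ρ : Fin n → Finset ℕ} : ρ ∈ succSet P ↔ ∃ g, ρ = Fr P g := by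
  simp only [succSet, Finset.mem_image, Finset.mem_univ, true_and, Fr]
  constructor
  · rintro ⟨g, rfl⟩; exact ⟨g, rfl⟩
  · rintro ⟨g, rfl⟩; exact ⟨g, rfl⟩

lemma mem_Rfin (hn : 1 ≤ n) : ∀ (k : ℕ) (ρ : Fin n → Finset ℕ),
    ρ ∈ Rfin n k ↔ IsRvalid k ρ
  | 0, ρ => by
    rw [Rfin, Finset.mem_singleton, rvalid_zero hn]
  | k + 1, ρ => by
    rw [Rfin]
    simp only [Finset.mem_biUnion, mem_succSet]
    constructor
    · rintro ⟨P, hP, g, rfl⟩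
      exact rvalid_Fr ((mem_Rfin hn k P).1 hP) g
    · intro h
      obtain ⟨P, hP, g, rfl⟩ := rvalid_succ h
      exact ⟨P, (mem_Rfin hn k P).2 hP, g, rfl⟩

lemma Fr_inter_low {k : ℕ} {P : Fin n → Finset ℕ} (hE : IsEXP k P) (g : Fin n → Fin n)
    (q : Fin n) : Fr P g q ∩ Finset.Icc 1 (2 ^ k) = P q := by
  ext x
  simp only [Finset.mem_inter, Finset.mem_Icc]
  constructor
  · rintro ⟨hx, hx1, hx2⟩
    rcases (mem_Fr hE).1 hx with h | ⟨p, _, y, hy, rfl⟩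
    · exact h
    · have := (Finset.mem_Icc.1 (exp_memIcc hE hy)).1; omega
  · intro hx
    have := Finset.mem_Icc.1 (exp_memIcc hE hx)
    exact ⟨(mem_Fr hE).2 (Or.inl hx), this.1, this.2⟩

lemma succSet_disj {k : ℕ} {P P' : Fin n → Finset ℕ} (hP : IsEXP k P) (hP' : IsEXP k P')
    (hne : P ≠ P') : Disjoint (succSet P) (succSet P') := by
  rw [Finset.disjoint_left]
  rintro ρ h1 h2
  obtain ⟨g, rfl⟩ := mem_succSet.1 h1
  obtain ⟨g', hEq⟩ := mem_succSet.1 h2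
  apply hne
  funext q
  rw [← Fr_inter_low hP g q, hEq, Fr_inter_low hP' g' q]

lemma Fr_injOn {k : ℕ} {P : Fin n → Finset ℕ} (hE : IsEXP k P) {g g' : Fin n → Fin n}
    (hg : ∀ p, p ∉ slotsF P → g p = p) (hg' : ∀ p, p ∉ slotsF P → g' p = p)
    (hEq : Fr P g = Fr P g') : g = g' := by
  funext p
  by_cases hp : p ∈ slotsF P
  · have hne : P p ≠ ∅ := (Finset.mem_filter.1 hp).2
    obtain ⟨y, hy⟩ := Finset.nonempty_iff_ne_empty.2 hne
    have h1 : y + 2 ^ k ∈ Fr P g (g p) := (mem_Fr hE).2 (Or.inr ⟨p, rfl, y, hy, rfl⟩)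
    have h2 : y + 2 ^ k ∈ Fr P g' (g' p) := (mem_Fr hE).2 (Or.inr ⟨p, rfl, y, hy, rfl⟩)
    rw [hEq] at h1
    exact exp_unique (exp_Fr_isEXP hE g') h1 h2
  · rw [hg p hp, hg' p hp]

lemma dotAct_congr {P : Fin n → Finset ℕ} {g g' : Fin n → Fin n}
    (h : ∀ p, P p ≠ ∅ → g p = g' p) : dotAct P g = dotAct P g' := by
  funext q
  ext x
  simp only [mem_dotAct]
  constructor
  · rintro ⟨p, hgp, hx⟩
    have hne : P p ≠ ∅ := fun he => by simp [he] at hx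
    exact ⟨p, (h p hne) ▸ hgp, hx⟩
  · rintro ⟨p, hgp, hx⟩
    have hne : P p ≠ ∅ := fun he => by simp [he] at hx
    exact ⟨p, (h p hne) ▸ hgp, hx⟩

/-- Canonical representatives: functions fixing everything outside `S`. -/
def Gset (S : Finset (Fin n)) : Finset (Fin n → Fin n) :=
  Finset.univ.filter (fun g => ∀ p, p ∉ S → g p = p)

lemma succSet_eq (P : Fin n → Finset ℕ) :
    succSet P = (Gset (slotsF P)).image (fun g => Fr P g) := by
  apply Finset.Subset.antisymm
  · intro ρ hρ
    obtain ⟨g, rfl⟩ := mem_succSet.1 hρ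
    classical
    set g' : Fin n → Fin n := fun p => if p ∈ slotsF P then g p else p with hg'def
    have hFr : Fr P g = Fr P g' := by
      unfold Fr
      rw [dotAct_congr (g' := g') (fun p hp => by
        simp [hg'def, slotsF, Finset.mem_filter, hp])]
    rw [hFr]
    refine Finset.mem_image.2 ⟨g', Finset.mem_filter.2 ⟨Finset.mem_univ _, fun p hp => by
      simp [hg'def, hp]⟩, rfl⟩
  · intro ρ hρ
    obtain ⟨g, _, rfl⟩ := Finset.mem_image.1 hρ
    exact mem_succSet.2 ⟨g, rfl⟩

/-- The transition coefficient `u(S',S)`. -/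
def uCoef (n : ℕ) (S' S : Finset (Fin n)) : ℕ :=
  ((Gset S').filter (fun g => S' ∪ S'.image g = S)).card

lemma succSet_filter_card {k : ℕ} {P : Fin n → Finset ℕ} (hE : IsEXP k P)
    (S : Finset (Fin n)) :
    ((succSet P).filter (fun ρ => slotsF ρ = S)).card = uCoef n (slotsF P) S := by
  classical
  have h1 : ((Gset (slotsF P)).image (fun g => Fr P g)).filter (fun ρ => slotsF ρ = S)
      = ((Gset (slotsF P)).filter
          (fun g => slotsF P ∪ (slotsF P).image g = S)).image (fun g => Fr P g) := by
    ext ρ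
    simp only [Finset.mem_filter, Finset.mem_image]
    constructor
    · rintro ⟨⟨g, hg, rfl⟩, hs⟩
      exact ⟨g, ⟨hg, by rwa [slots_Fr hE g] at hs⟩, rfl⟩
    · rintro ⟨g, ⟨hg, hs⟩, rfl⟩
      exact ⟨⟨g, hg, rfl⟩, by rwa [slots_Fr hE g]⟩
  rw [succSet_eq, h1, uCoef, Finset.card_image_of_injOn]
  intro g hg g' hg' hEq
  have hgm := (Finset.mem_filter.1 (Finset.mem_filter.1 hg).1).2
  have hgm' := (Finset.mem_filter.1 (Finset.mem_filter.1 hg').1).2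
  exact Fr_injOn hE hgm hgm' hEq

lemma uCoef_eq_zero {S' S : Finset (Fin n)} (h : ¬S' ⊆ S) : uCoef n S' S = 0 := by
  rw [uCoef, Finset.card_eq_zero, Finset.filter_eq_empty_iff]
  intro g _ hEq
  exact h (hEq ▸ Finset.subset_union_left)

lemma uCoef_self (S : Finset (Fin n)) : uCoef n S S = S.card ^ S.card := by
  classical
  rw [uCoef]
  rw [show S.card ^ S.card = Fintype.card ({x // x ∈ S} → {x // x ∈ S}) by
    rw [Fintype.card_fun, Fintype.card_coe], ← Finset.card_univ]
  have himg : ∀ g ∈ (Gset S).filter (fun g => S ∪ S.image g = S),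
      ∀ p : Fin n, p ∈ S → g p ∈ S := by
    intro g hg p hp
    have := (Finset.mem_filter.1 hg).2
    rw [Finset.union_eq_left] at this
    exact this (Finset.mem_image.2 ⟨p, hp, rfl⟩)
  refine Finset.card_bij'
    (fun g hg => fun p : {x // x ∈ S} => (⟨g p.1, himg g hg p.1 p.2⟩ : {x // x ∈ S}))
    (fun h _ => fun p : Fin n => if hp : p ∈ S then (h ⟨p, hp⟩).1 else p)
    (fun g hg => Finset.mem_univ _) ?_ ?_ ?_
  · intro h _
    refine Finset.mem_filter.2 ⟨Finset.mem_filter.2 ⟨Finset.mem_univ _, fun p hp => dif_neg hp⟩, ?_⟩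
    rw [Finset.union_eq_left]
    intro x hx
    obtain ⟨p, hp, rfl⟩ := Finset.mem_image.1 hx
    simpa [hp] using (h ⟨p, hp⟩).2
  · intro g hg
    funext p
    by_cases hp : p ∈ S
    · simp [hp]
    · simp only [dif_neg hp]
      exact ((Finset.mem_filter.1 (Finset.mem_filter.1 hg).1).2 p hp).symm
  · intro h _
    funext p
    apply Subtype.ext
    simp [p.2]

/-- `h(S,k)` : the number of `k`-Rvalid vectors with nonempty slots exactly `S`. -/
def hcount (n : ℕ) (S : Finset (Fin n)) (k : ℕ) : ℕ :=
  ((Rfin n k).filter (fun ρ => slotsF ρ = S)).card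

lemma hcount_zero (hn : 1 ≤ n) (S : Finset (Fin n)) :
    hcount n S 0 = if slotsF (rho0 n) = S then 1 else 0 := by
  rw [hcount, Rfin, Finset.filter_singleton]
  split <;> simp [*]

lemma hcount_empty (hn : 1 ≤ n) (k : ℕ) : hcount n ∅ k = 0 := by
  rw [hcount, Finset.card_eq_zero, Finset.filter_eq_empty_iff]
  intro ρ hρ hs
  have h := ((mem_Rfin hn k ρ).1 hρ).2.1 ⟨0, hn⟩ rfl
  have hne : ρ ⟨0, hn⟩ ≠ ∅ := fun he => by simp [he] at h
  have hmem : (⟨0, hn⟩ : Fin n) ∈ slotsF ρ := Finset.mem_filter.2 ⟨Finset.mem_univ _, hne⟩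
  rw [hs] at hmem
  simp at hmem

lemma hcount_succ (hn : 1 ≤ n) (S : Finset (Fin n)) (k : ℕ) :
    hcount n S (k + 1) =
      ∑ S' ∈ Finset.univ.powerset, uCoef n S' S * hcount n S' k := by
  classical
  have hexp : ∀ P ∈ Rfin n k, IsEXP k P := fun P hP => ((mem_Rfin hn k P).1 hP).1
  have hstep : hcount n S (k + 1) = ∑ P ∈ Rfin n k, uCoef n (slotsF P) S := by
    rw [hcount]
    show (((Rfin n k).biUnion succSet).filter _).card = _
    rw [Finset.filter_biUnion, Finset.card_biUnion]
    · exact Finset.sum_congr rfl fun P hP => succSet_filter_card (hexp P hP) S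
    · intro P hP P' hP' hne
      exact Disjoint.mono (Finset.filter_subset _ _) (Finset.filter_subset _ _)
        (succSet_disj (hexp P hP) (hexp P' hP') hne)
  rw [hstep, ← Finset.sum_fiberwise_of_maps_to
    (g := fun P => slotsF P) (t := Finset.univ.powerset)
    (fun P _ => Finset.mem_powerset.2 (Finset.subset_univ _))]
  apply Finset.sum_congr rfl
  intro S' _
  have : ∀ P ∈ (Rfin n k).filter (fun P => slotsF P = S'),
      uCoef n (slotsF P) S = uCoef n S' S := by
    intro P hP
    rw [(Finset.mem_filter.1 hP).2]
  rw [Finset.sum_congr rfl this, Finset.sum_const, smul_eq_mul, ← hcount, Nat.mul_comm]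

lemma seq_geom (r : ℕ → ℚ) (T : Finset ℕ) (c : ℕ → ℚ) (m : ℚ) (b : ℕ → ℚ)
    (hb : ∀ i ∈ T, b i ≠ 0 → r i ≠ m)
    (hrec : ∀ k, c (k + 1) = m * c k + ∑ i ∈ T, b i * r i ^ k) :
    ∀ k, c k = (c 0 - ∑ i ∈ T, b i / (r i - m)) * m ^ k
      + ∑ i ∈ T, (b i / (r i - m)) * r i ^ k := by
  intro k
  induction k with
  | zero => simp only [pow_zero, mul_one]; ring
  | succ k ih =>
    have hterm : ∀ i ∈ T, b i / (r i - m) * r i ^ (k + 1)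
        = m * (b i / (r i - m) * r i ^ k) + b i * r i ^ k := by
      intro i hi
      by_cases hbi : b i = 0
      · simp [hbi]
      · have hne : r i - m ≠ 0 := sub_ne_zero.2 (hb i hi hbi)
        field_simp
        ring
    rw [hrec k, ih, Finset.sum_congr rfl hterm, Finset.sum_add_distrib, ← Finset.mul_sum]
    ring

lemma pow_self_lt {i j : ℕ} (h1 : 1 ≤ i) (h : i < j) : i ^ i < j ^ j :=
  lt_of_le_of_lt (Nat.pow_le_pow_left (le_of_lt h) i)
    (Nat.pow_lt_pow_right (by omega) h)

/-- The geometric base `i^i` as a rational. -/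
def rfun (i : ℕ) : ℚ := ((i ^ i : ℕ) : ℚ)

lemma rfun_def (i : ℕ) : rfun i = ((i ^ i : ℕ) : ℚ) := rfl

lemma hcount_repr (hn : 1 ≤ n) :
    ∀ (c : ℕ) (S : Finset (Fin n)), S.card = c →
      ∃ a : ℕ → ℚ, (∀ i, S.card < i → a i = 0) ∧
        ∀ k, (hcount n S k : ℚ) = ∑ i ∈ Finset.Icc 1 n, a i * ((i ^ i : ℕ) : ℚ) ^ k := by
  have hreq : ∀ i : ℕ, ((i ^ i : ℕ) : ℚ) = rfun i := fun _ => rfl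
  intro c
  induction c using Nat.strong_induction_on with
  | _ c IH =>
  intro S hSc
  classical
  by_cases hS0 : S = ∅
  · refine ⟨0, fun i _ => rfl, fun k => ?_⟩
    simp [hS0, hcount_empty hn]
  have hs1 : 1 ≤ S.card := Finset.card_pos.2 (Finset.nonempty_iff_ne_empty.2 hS0)
  have hsn : S.card ≤ n := by
    have := Finset.card_le_univ S
    simpa using this
  have hIH : ∀ S' : Finset (Fin n), ∃ a : ℕ → ℚ, S'.card < S.card →
      ((∀ i, S'.card < i → a i = 0) ∧
        ∀ k, (hcount n S' k : ℚ) = ∑ i ∈ Finset.Icc 1 n, a i * ((i ^ i : ℕ) : ℚ) ^ k) := by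
    intro S'
    by_cases h : S'.card < S.card
    · obtain ⟨a, ha⟩ := IH S'.card (hSc ▸ h) S' rfl
      exact ⟨a, fun _ => ha⟩
    · exact ⟨0, fun h' => absurd h' h⟩
  choose A hA using hIH
  set b : ℕ → ℚ := fun i =>
    ∑ S' ∈ Finset.univ.powerset.erase S, (uCoef n S' S : ℚ) * A S' i with hbdef
  have hWlt : ∀ S' ∈ Finset.univ.powerset.erase S, uCoef n S' S ≠ 0 →
      S'.card < S.card := by
    intro S' hS' hu
    have hsub : S' ⊆ S := by
      by_contra hns
      exact hu (uCoef_eq_zero hns)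
    have hne : S' ≠ S := (Finset.mem_erase.1 hS').1
    exact Finset.card_lt_card (Finset.ssubset_iff_subset_ne.2 ⟨hsub, hne⟩)
  have hbz : ∀ i, S.card ≤ i → b i = 0 := by
    intro i hi
    rw [hbdef]
    apply Finset.sum_eq_zero
    intro S' hS'
    by_cases hu : uCoef n S' S = 0
    · simp [hu]
    · have hlt := hWlt S' hS' hu
      rw [(hA S' hlt).1 i (by omega)]
      ring
  have hrec : ∀ k, (hcount n S (k + 1) : ℚ)
      = rfun S.card * (hcount n S k : ℚ) + ∑ i ∈ Finset.Icc 1 n, b i * rfun i ^ k := by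
    intro k
    have hSmem : S ∈ Finset.univ.powerset := Finset.mem_powerset.2 (Finset.subset_univ S)
    rw [hcount_succ hn S k, ← Finset.sum_erase_add _ _ hSmem, uCoef_self]
    push_cast
    have hsw : ∀ S' ∈ Finset.univ.powerset.erase S,
        ((uCoef n S' S : ℚ) * (hcount n S' k : ℚ))
        = ∑ i ∈ Finset.Icc 1 n, (uCoef n S' S : ℚ) * A S' i * rfun i ^ k := by
      intro S' hS'
      by_cases hu : uCoef n S' S = 0
      · simp [hu]
      · rw [(hA S' (hWlt S' hS' hu)).2 k, Finset.mul_sum]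
        exact Finset.sum_congr rfl fun i _ => by rw [rfun_def]; ring
    rw [Finset.sum_congr rfl hsw, Finset.sum_comm]
    have hcollect : ∀ i ∈ Finset.Icc 1 n,
        (∑ S' ∈ Finset.univ.powerset.erase S, (uCoef n S' S : ℚ) * A S' i * rfun i ^ k)
        = b i * rfun i ^ k := by
      intro i _
      rw [hbdef, Finset.sum_mul]
    rw [Finset.sum_congr rfl hcollect]
    have hrs : rfun S.card = ((S.card : ℚ)) ^ S.card := by rw [rfun_def]; push_cast; ring
    rw [hrs]
    ring
  have hb : ∀ i ∈ Finset.Icc 1 n, b i ≠ 0 → rfun i ≠ rfun S.card := by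
    intro i hi hbne
    have hilt : i < S.card := by
      by_contra hge
      exact hbne (hbz i (by omega))
    have h1i : 1 ≤ i := (Finset.mem_Icc.1 hi).1
    have hlt := pow_self_lt h1i hilt
    intro hEq
    rw [rfun_def, rfun_def] at hEq
    have : (i ^ i : ℕ) = (S.card ^ S.card : ℕ) := by exact_mod_cast hEq
    omega
  have hmain := seq_geom rfun (Finset.Icc 1 n) (fun k => (hcount n S k : ℚ))
    (rfun S.card) b hb hrec
  refine ⟨fun i => b i / (rfun i - rfun S.card) + if i = S.card then
      ((hcount n S 0 : ℚ) - ∑ j ∈ Finset.Icc 1 n, b j / (rfun j - rfun S.card))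
    else 0, ?_, ?_⟩
  · intro i hi
    have hb0 : b i = 0 := hbz i (le_of_lt hi)
    simp [hb0, ne_of_gt hi]
  · intro k
    refine (hmain k).trans ?_
    simp only [hreq]
    rw [Finset.sum_congr rfl (fun i (_ : i ∈ Finset.Icc 1 n) =>
      (by split <;> ring :
        (b i / (rfun i - rfun S.card) + if i = S.card then
          ((hcount n S 0 : ℚ) - ∑ j ∈ Finset.Icc 1 n, b j / (rfun j - rfun S.card))
          else 0) * rfun i ^ k
        = b i / (rfun i - rfun S.card) * rfun i ^ k
          + (if i = S.card then
              ((hcount n S 0 : ℚ) - ∑ j ∈ Finset.Icc 1 n, b j / (rfun j - rfun S.card))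
                * rfun i ^ k
            else 0))), Finset.sum_add_distrib,
      Finset.sum_ite_eq' (Finset.Icc 1 n) S.card
        (fun i => ((hcount n S 0 : ℚ) - ∑ j ∈ Finset.Icc 1 n, b j / (rfun j - rfun S.card))
          * rfun i ^ k),
      if_pos (Finset.mem_Icc.2 ⟨hs1, hsn⟩)]
    ring

end Stmt14Aux

theorem stmt14 (n : ℕ) (hn : 1 ≤ n) :
    ∃ a : ℕ → ℚ, ∀ k : ℕ,
      ({ρ : Fin n → Finset ℕ | IsRvalid k ρ}.ncard : ℚ) =
        ∑ i ∈ Finset.Icc 1 n, a i * ((i ^ i : ℕ) : ℚ) ^ k := by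
  classical
  have hrep : ∀ S : Finset (Fin n), ∃ a : ℕ → ℚ,
      ∀ k, ((Stmt14Aux.hcount n S k : ℕ) : ℚ)
        = ∑ i ∈ Finset.Icc 1 n, a i * ((i ^ i : ℕ) : ℚ) ^ k := by
    intro S
    obtain ⟨a, _, ha⟩ := Stmt14Aux.hcount_repr hn S.card S rfl
    exact ⟨a, ha⟩
  choose A hA using hrep
  refine ⟨fun i => ∑ S ∈ Finset.univ.powerset, A S i, fun k => ?_⟩
  have hset : {ρ : Fin n → Finset ℕ | IsRvalid k ρ} = ↑(Stmt14Aux.Rfin n k) := by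
    ext ρ
    simp [Stmt14Aux.mem_Rfin hn k ρ]
  rw [hset, Set.ncard_coe_finset]
  have hcard : (Stmt14Aux.Rfin n k).card
      = ∑ S ∈ Finset.univ.powerset, Stmt14Aux.hcount n S k :=
    Finset.card_eq_sum_card_fiberwise
      (fun ρ _ => Finset.mem_powerset.2 (Finset.subset_univ _))
  rw [hcard, Nat.cast_sum]
  rw [Finset.sum_congr rfl (fun S _ => hA S k), Finset.sum_comm]
  exact Finset.sum_congr rfl fun i _ => (Finset.sum_mul _ _ _).symm
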